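/- Let λ < 0, c > 0, 0 < ν < 1, β_k = c/(1+k)^ν, and let r > 0. Then max_{0 ≤ i ≤ t} { exp((λ/2)·∑_{k=i+1}^{t} β_k) · (1+i)^{-r} } ≤ exp((λc/(2(1−ν)))·((1+t)^{1−ν} − 1))·D + (1+t)^{-r}, where D = max_{0 ≤ i ≤ i_d} { exp(−(λ/2)·∑_{k=0}^{i} β_k)·(1+i)^{-r} } and i_d = (2r/(|λ|c))^{1/(1−ν)}. -/

import Mathlib

open Finset Real

namespace Stmt15Aux

noncomputable def L (n : ℕ) : ℝ := Real.log ((2 + (n : ℝ)) / (1 + (n : ℝ)))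

lemma L_eq (n : ℕ) : L n = Real.log (2 + (n : ℝ)) - Real.log (1 + (n : ℝ)) := by
  rw [L, Real.log_div (by positivity) (by positivity)]

lemma L_nonneg (n : ℕ) : 0 ≤ L n := by
  apply Real.log_nonneg
  rw [le_div_iff₀ (by positivity)]
  linarith [Nat.cast_nonneg (α := ℝ) n]

lemma L_succ (n : ℕ) : L (n + 1) = Real.log ((3 + (n : ℝ)) / (2 + (n : ℝ))) := by
  rw [L]; push_cast; ring_nf

/-- the sequence `(2+n) * log ((2+n)/(1+n))` is nonincreasing -/
lemma v_step (n : ℕ) : (3 + (n : ℝ)) * L (n + 1) ≤ (2 + (n : ℝ)) * L n := by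
  set b : ℝ := 1 + (n : ℝ) with hb
  have hb1 : (1 : ℝ) ≤ b := by simp [hb, Nat.cast_nonneg]
  have hb0 : (0 : ℝ) < b := lt_of_lt_of_le one_pos hb1
  have hb10 : (0 : ℝ) < b + 1 := by linarith
  have hb20 : (0 : ℝ) < b + 2 := by linarith
  set q₁ : ℝ := (b + 1) / b with hq1
  set q₂ : ℝ := (b + 2) / (b + 1) with hq2
  have hq1pos : 0 < q₁ := by positivity
  have hq2pos : 0 < q₂ := by positivity
  -- Bernoulli
  have hbern : 1 + ((n : ℝ) + 2) * (1 / (b * (b + 2))) ≤ (1 + 1 / (b * (b + 2))) ^ (n + 2) := by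
    have hd : (0:ℝ) ≤ 1 / (b * (b + 2)) := by positivity
    have := one_add_mul_le_pow (a := 1 / (b * (b + 2))) (by linarith) (n + 2)
    push_cast at this ⊢
    linarith
  have hqq : (1 + 1 / (b * (b + 2))) = q₁ / q₂ := by
    rw [hq1, hq2]; field_simp; ring
  have h2 : q₂ ≤ 1 + ((n : ℝ) + 2) * (1 / (b * (b + 2))) := by
    have hn : (n : ℝ) + 2 = b + 1 := by rw [hb]; ring
    rw [hq2, hn, div_le_iff₀ hb10]
    have key : (1 + (b + 1) * (1 / (b * (b + 2)))) * (b + 1)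
        = (b + 1) + (b + 1) ^ 2 / (b * (b + 2)) := by
      field_simp
    rw [key]
    have h1 : 1 ≤ (b + 1) ^ 2 / (b * (b + 2)) := by
      rw [le_div_iff₀ (by positivity)]; nlinarith
    linarith
  have hkey : q₂ ^ (n + 3) ≤ q₁ ^ (n + 2) := by
    have h3 : q₂ ^ (n + 3) = q₂ * q₂ ^ (n + 2) := by ring
    have h4 : q₂ * (q₁ / q₂) ^ (n + 2) = q₁ ^ (n + 2) / q₂ ^ (n + 1) := by
      rw [div_pow]; field_simp; ring
    calc q₂ ^ (n + 3) = q₂ * q₂ ^ (n + 2) := h3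
      _ ≤ (1 + ((n : ℝ) + 2) * (1 / (b * (b + 2)))) * q₂ ^ (n + 2) := by
          apply mul_le_mul_of_nonneg_right h2 (by positivity)
      _ ≤ (1 + 1 / (b * (b + 2))) ^ (n + 2) * q₂ ^ (n + 2) := by
          apply mul_le_mul_of_nonneg_right hbern (by positivity)
      _ = (q₁ / q₂) ^ (n + 2) * q₂ ^ (n + 2) := by rw [hqq]
      _ = q₁ ^ (n + 2) := by rw [div_pow]; field_simp
  -- take logs
  have hL1 : L (n + 1) = Real.log q₂ := by
    rw [L_succ, hq2, hb]; norm_num; ring_nf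
  have hL0 : L n = Real.log q₁ := by
    rw [L, hq1, hb]; ring_nf
  have hlog := Real.log_le_log (by positivity) hkey
  rw [Real.log_pow, Real.log_pow] at hlog
  rw [hL1, hL0]
  push_cast at hlog
  have hbn : (3 : ℝ) + n = ((n : ℝ) + 3) := by ring
  nlinarith [hlog]


lemma u_antitone (ν : ℝ) (hν0 : 0 < ν) (hν1 : ν < 1) :
    Antitone (fun n : ℕ => (2 + (n : ℝ)) ^ ν * L n) := by
  apply antitone_nat_of_succ_le
  intro n
  have h2 : (0 : ℝ) < 2 + n := by positivity
  have h3 : (0 : ℝ) < 3 + n := by positivity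
  have hcast : (2 : ℝ) + ((n : ℕ) + 1 : ℕ) = 3 + (n : ℝ) := by push_cast; ring
  simp only [hcast]
  have hsplit : (3 + (n : ℝ)) ^ ν = (2 + (n : ℝ)) ^ ν * ((3 + (n : ℝ)) / (2 + (n : ℝ))) ^ ν := by
    rw [← Real.mul_rpow h2.le (by positivity)]
    rw [mul_div_cancel₀ _ h2.ne']
  rw [hsplit]
  have hq1 : (1 : ℝ) ≤ (3 + (n : ℝ)) / (2 + (n : ℝ)) := by
    rw [le_div_iff₀ h2]; linarith
  have hqν : ((3 + (n : ℝ)) / (2 + (n : ℝ))) ^ ν ≤ (3 + (n : ℝ)) / (2 + (n : ℝ)) := by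
    calc ((3 + (n : ℝ)) / (2 + (n : ℝ))) ^ ν ≤ ((3 + (n : ℝ)) / (2 + (n : ℝ))) ^ (1 : ℝ) :=
        Real.rpow_le_rpow_of_exponent_le hq1 hν1.le
      _ = _ := Real.rpow_one _
  have hv : ((3 + (n : ℝ)) / (2 + (n : ℝ))) * L (n + 1) ≤ L n := by
    rw [div_mul_eq_mul_div, div_le_iff₀ h2]
    calc (3 + (n : ℝ)) * L (n + 1) ≤ (2 + (n : ℝ)) * L n := v_step n
      _ = L n * (2 + (n : ℝ)) := by ring
  calc (2 + (n : ℝ)) ^ ν * ((3 + (n : ℝ)) / (2 + (n : ℝ))) ^ ν * L (n + 1)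
      ≤ (2 + (n : ℝ)) ^ ν * (((3 + (n : ℝ)) / (2 + (n : ℝ))) * L (n + 1)) := by
        rw [mul_assoc]
        apply mul_le_mul_of_nonneg_left _ (by positivity)
        exact mul_le_mul_of_nonneg_right hqν (L_nonneg _)
    _ ≤ (2 + (n : ℝ)) ^ ν * L n := by
        apply mul_le_mul_of_nonneg_left hv (by positivity)

lemma rpow_concave_step (ν : ℝ) (hν0 : 0 < ν) (hν1 : ν < 1) (x : ℝ) (hx : 1 ≤ x) :
    (x + 1) ^ (1 - ν) ≤ x ^ (1 - ν) + (1 - ν) * x ^ (-ν) := by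
  have hx0 : (0 : ℝ) < x := lt_of_lt_of_le one_pos hx
  have hgm : (x + 1) ^ (1 - ν) * x ^ ν ≤ (1 - ν) * (x + 1) + ν * x :=
    Real.geom_mean_le_arith_mean2_weighted (by linarith) hν0.le (by linarith) hx0.le (by ring)
  have hxν : (0 : ℝ) < x ^ ν := Real.rpow_pos_of_pos hx0 ν
  have h1 : (x + 1) ^ (1 - ν) = ((x + 1) ^ (1 - ν) * x ^ ν) * x ^ (-ν) := by
    rw [mul_assoc, ← Real.rpow_add hx0]
    simp
  rw [h1]
  have h2 : ((1 - ν) * (x + 1) + ν * x) * x ^ (-ν) = x * x ^ (-ν) + (1 - ν) * x ^ (-ν) := by ring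
  calc ((x + 1) ^ (1 - ν) * x ^ ν) * x ^ (-ν)
      ≤ ((1 - ν) * (x + 1) + ν * x) * x ^ (-ν) := by
        apply mul_le_mul_of_nonneg_right hgm (Real.rpow_pos_of_pos hx0 _).le
    _ = x * x ^ (-ν) + (1 - ν) * x ^ (-ν) := h2
    _ = x ^ (1 : ℝ) * x ^ (-ν) + (1 - ν) * x ^ (-ν) := by rw [Real.rpow_one]
    _ = x ^ (1 - ν) + (1 - ν) * x ^ (-ν) := by
        rw [show (1 : ℝ) - ν = 1 + (-ν) by ring, Real.rpow_add hx0]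

lemma sum_beta_ge (c ν : ℝ) (hc : 0 < c) (hν0 : 0 < ν) (hν1 : ν < 1) (t : ℕ) :
    c / (1 - ν) * ((1 + (t : ℝ)) ^ (1 - ν) - 1) ≤
      ∑ k ∈ Finset.range (t + 1), c / (1 + (k : ℝ)) ^ ν := by
  have h1ν : (0 : ℝ) < 1 - ν := by linarith
  have main : ∀ t : ℕ, c / (1 - ν) * ((2 + (t : ℝ)) ^ (1 - ν) - 1) ≤
      ∑ k ∈ Finset.range (t + 1), c / (1 + (k : ℝ)) ^ ν := by
    intro t
    induction t with
    | zero =>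
      have hconc := rpow_concave_step ν hν0 hν1 1 le_rfl
      rw [Real.one_rpow, Real.one_rpow] at hconc
      have h12 : (1 : ℝ) + 1 = 2 := by norm_num
      rw [h12] at hconc
      have hsum : ∑ k ∈ Finset.range (0 + 1), c / (1 + (k : ℝ)) ^ ν = c := by
        norm_num
      rw [hsum]
      have h20 : (2 : ℝ) + ((0 : ℕ) : ℝ) = 2 := by norm_num
      rw [h20, div_mul_eq_mul_div, div_le_iff₀ h1ν]
      nlinarith
    | succ n ih =>
      rw [Finset.sum_range_succ]
      have hx : (1 : ℝ) ≤ 2 + (n : ℝ) := by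
        have := Nat.cast_nonneg (α := ℝ) n; linarith
      have hx0 : (0 : ℝ) < 2 + (n : ℝ) := by linarith
      have hcs := rpow_concave_step ν hν0 hν1 (2 + (n : ℝ)) hx
      have hcast : (1 : ℝ) + ((n + 1 : ℕ) : ℝ) = 2 + (n : ℝ) := by push_cast; ring
      have hcast2 : (2 : ℝ) + ((n + 1 : ℕ) : ℝ) = 2 + (n : ℝ) + 1 := by push_cast; ring
      rw [hcast, hcast2]
      have hneg : (2 + (n : ℝ)) ^ (-ν) = 1 / (2 + (n : ℝ)) ^ ν := by
        rw [Real.rpow_neg hx0.le, one_div]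
      have hkey : c / (1 - ν) * ((2 + (n : ℝ) + 1) ^ (1 - ν) - (2 + (n : ℝ)) ^ (1 - ν))
          ≤ c / (2 + (n : ℝ)) ^ ν := by
        have h1 : c / (1 - ν) * ((2 + (n : ℝ) + 1) ^ (1 - ν) - (2 + (n : ℝ)) ^ (1 - ν))
            ≤ c / (1 - ν) * ((1 - ν) * (2 + (n : ℝ)) ^ (-ν)) := by
          apply mul_le_mul_of_nonneg_left _ (by positivity)
          linarith
        have h2 : c / (1 - ν) * ((1 - ν) * (2 + (n : ℝ)) ^ (-ν)) = c / (2 + (n : ℝ)) ^ ν := by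
          rw [hneg]; field_simp
        linarith
      linarith
  calc c / (1 - ν) * ((1 + (t : ℝ)) ^ (1 - ν) - 1)
      ≤ c / (1 - ν) * ((2 + (t : ℝ)) ^ (1 - ν) - 1) := by
        apply mul_le_mul_of_nonneg_left _ (by positivity)
        have : (1 + (t : ℝ)) ^ (1 - ν) ≤ (2 + (t : ℝ)) ^ (1 - ν) :=
          Real.rpow_le_rpow (by positivity) (by linarith) h1ν.le
        linarith
    _ ≤ _ := main t

lemma core_up (lam c ν r : ℝ) (hlam : lam < 0) (hc : 0 < c) (hν0 : 0 < ν) (hr : 0 < r) (j : ℕ)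
    (h : r * ((2 + (j : ℝ)) ^ ν * L j) ≤ -lam * c / 2) :
    Real.exp (lam / 2 * (c / (2 + (j : ℝ)) ^ ν)) * (1 + (j : ℝ)) ^ (-r)
      ≤ (2 + (j : ℝ)) ^ (-r) := by
  have h1 : (0 : ℝ) < 1 + j := by positivity
  have h2 : (0 : ℝ) < 2 + j := by positivity
  have hP : (0 : ℝ) < (2 + (j : ℝ)) ^ ν := Real.rpow_pos_of_pos h2 ν
  rw [← Real.log_le_log_iff (by positivity) (Real.rpow_pos_of_pos h2 _),
    Real.log_mul (Real.exp_ne_zero _) (Real.rpow_pos_of_pos h1 _).ne', Real.log_exp,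
    Real.log_rpow h1, Real.log_rpow h2]
  rw [L_eq] at h
  set a := Real.log (1 + (j : ℝ)) with ha
  set b := Real.log (2 + (j : ℝ)) with hb
  set P := (2 + (j : ℝ)) ^ ν with hPdef
  have e2 : (-r * b + r * a) * P = -(r * (P * (b - a))) := by ring
  have h' : lam * c / 2 ≤ (-r * b + r * a) * P := by rw [e2]; linarith
  have h'' := (div_le_iff₀ hP).mpr h'
  have e : lam / 2 * (c / P) = lam * c / 2 / P := by ring
  rw [e]
  linarith

lemma core_down (lam c ν r : ℝ) (hlam : lam < 0) (hc : 0 < c) (hν0 : 0 < ν) (hr : 0 < r) (j : ℕ)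
    (h : -lam * c / 2 ≤ r * ((2 + (j : ℝ)) ^ ν * L j)) :
    (2 + (j : ℝ)) ^ (-r)
      ≤ Real.exp (lam / 2 * (c / (2 + (j : ℝ)) ^ ν)) * (1 + (j : ℝ)) ^ (-r) := by
  have h1 : (0 : ℝ) < 1 + j := by positivity
  have h2 : (0 : ℝ) < 2 + j := by positivity
  have hP : (0 : ℝ) < (2 + (j : ℝ)) ^ ν := Real.rpow_pos_of_pos h2 ν
  rw [← Real.log_le_log_iff (Real.rpow_pos_of_pos h2 _) (by positivity),
    Real.log_mul (Real.exp_ne_zero _) (Real.rpow_pos_of_pos h1 _).ne', Real.log_exp,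
    Real.log_rpow h1, Real.log_rpow h2]
  rw [L_eq] at h
  set a := Real.log (1 + (j : ℝ)) with ha
  set b := Real.log (2 + (j : ℝ)) with hb
  set P := (2 + (j : ℝ)) ^ ν with hPdef
  have e2 : (-r * b + r * a) * P = -(r * (P * (b - a))) := by ring
  have h' : (-r * b + r * a) * P ≤ lam * c / 2 := by rw [e2]; linarith
  have h'' := (le_div_iff₀ hP).mpr h'
  have e : lam / 2 * (c / P) = lam * c / 2 / P := by ring
  rw [e]
  linarith

noncomputable def Fa (lam c ν r : ℝ) (t i : ℕ) : ℝ :=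
  Real.exp ((lam / 2) * ∑ k ∈ Finset.Icc (i + 1) t, c / (1 + (k : ℝ)) ^ ν) *
    (1 + (i : ℝ)) ^ (-r)

lemma sum_split (c ν : ℝ) (t j : ℕ) (hjt : j < t) :
    ∑ k ∈ Finset.Icc (j + 1) t, c / (1 + (k : ℝ)) ^ ν
      = c / (2 + (j : ℝ)) ^ ν + ∑ k ∈ Finset.Icc (j + 2) t, c / (1 + (k : ℝ)) ^ ν := by
  have hins : Finset.Icc (j + 1) t = insert (j + 1) (Finset.Icc (j + 2) t) := by
    ext x; simp only [Finset.mem_Icc, Finset.mem_insert]; omega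
  rw [hins, Finset.sum_insert (by simp)]
  have : (1 : ℝ) + ((j + 1 : ℕ) : ℝ) = 2 + (j : ℝ) := by push_cast; ring
  rw [this]

lemma Fa_step_up (lam c ν r : ℝ) (hlam : lam < 0) (hc : 0 < c) (hν0 : 0 < ν) (hr : 0 < r)
    (t j : ℕ) (hjt : j < t) (h : r * ((2 + (j : ℝ)) ^ ν * L j) ≤ -lam * c / 2) :
    Fa lam c ν r t j ≤ Fa lam c ν r t (j + 1) := by
  unfold Fa
  rw [sum_split c ν t j hjt, mul_add, Real.exp_add]
  have hcast : (1 : ℝ) + ((j + 1 : ℕ) : ℝ) = 2 + (j : ℝ) := by push_cast; ring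
  rw [hcast]
  have hcu := core_up lam c ν r hlam hc hν0 hr j h
  calc Real.exp (lam / 2 * (c / (2 + (j : ℝ)) ^ ν)) *
        Real.exp (lam / 2 * ∑ k ∈ Finset.Icc (j + 2) t, c / (1 + (k : ℝ)) ^ ν) *
        (1 + (j : ℝ)) ^ (-r)
      = Real.exp (lam / 2 * ∑ k ∈ Finset.Icc (j + 2) t, c / (1 + (k : ℝ)) ^ ν) *
        (Real.exp (lam / 2 * (c / (2 + (j : ℝ)) ^ ν)) * (1 + (j : ℝ)) ^ (-r)) := by ring
    _ ≤ Real.exp (lam / 2 * ∑ k ∈ Finset.Icc (j + 2) t, c / (1 + (k : ℝ)) ^ ν) *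
        (2 + (j : ℝ)) ^ (-r) := by
        exact mul_le_mul_of_nonneg_left hcu (Real.exp_nonneg _)

lemma Fa_step_down (lam c ν r : ℝ) (hlam : lam < 0) (hc : 0 < c) (hν0 : 0 < ν) (hr : 0 < r)
    (t j : ℕ) (hjt : j < t) (h : -lam * c / 2 ≤ r * ((2 + (j : ℝ)) ^ ν * L j)) :
    Fa lam c ν r t (j + 1) ≤ Fa lam c ν r t j := by
  unfold Fa
  rw [sum_split c ν t j hjt, mul_add, Real.exp_add]
  have hcast : (1 : ℝ) + ((j + 1 : ℕ) : ℝ) = 2 + (j : ℝ) := by push_cast; ring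
  rw [hcast]
  have hcd := core_down lam c ν r hlam hc hν0 hr j h
  calc Real.exp (lam / 2 * ∑ k ∈ Finset.Icc (j + 2) t, c / (1 + (k : ℝ)) ^ ν) *
        (2 + (j : ℝ)) ^ (-r)
      ≤ Real.exp (lam / 2 * ∑ k ∈ Finset.Icc (j + 2) t, c / (1 + (k : ℝ)) ^ ν) *
        (Real.exp (lam / 2 * (c / (2 + (j : ℝ)) ^ ν)) * (1 + (j : ℝ)) ^ (-r)) := by
        exact mul_le_mul_of_nonneg_left hcd (Real.exp_nonneg _)
    _ = Real.exp (lam / 2 * (c / (2 + (j : ℝ)) ^ ν)) *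
        Real.exp (lam / 2 * ∑ k ∈ Finset.Icc (j + 2) t, c / (1 + (k : ℝ)) ^ ν) *
        (1 + (j : ℝ)) ^ (-r) := by ring

lemma Fa_le_max (lam c ν r : ℝ) (hlam : lam < 0) (hc : 0 < c) (hν0 : 0 < ν) (hν1 : ν < 1)
    (hr : 0 < r) (t i : ℕ) (hit : i ≤ t) :
    Fa lam c ν r t i ≤ max (Fa lam c ν r t 0) (Fa lam c ν r t t) := by
  by_cases hcase : ∃ j, j < i ∧ r * ((2 + (j : ℝ)) ^ ν * L j) ≤ -lam * c / 2
  · obtain ⟨j, hji, hj⟩ := hcase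
    have hmono : ∀ k, j ≤ k → r * ((2 + (k : ℝ)) ^ ν * L k) ≤ -lam * c / 2 := by
      intro k hk
      have hu := u_antitone ν hν0 hν1 hk
      calc r * ((2 + (k : ℝ)) ^ ν * L k) ≤ r * ((2 + (j : ℝ)) ^ ν * L j) :=
            mul_le_mul_of_nonneg_left hu hr.le
        _ ≤ -lam * c / 2 := hj
    have chain2 : ∀ n, i ≤ n → n ≤ t → Fa lam c ν r t i ≤ Fa lam c ν r t n := by
      intro n
      induction n with
      | zero => intro h0 _; obtain rfl : i = 0 := Nat.le_zero.mp h0; exact le_rfl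
      | succ m ih =>
        intro him hmt
        rcases Nat.lt_or_ge i (m + 1) with hlt | hge
        · have h1 := ih (Nat.lt_succ_iff.mp hlt) (le_trans (Nat.le_succ m) hmt)
          have h2 := Fa_step_up lam c ν r hlam hc hν0 hr t m (by omega)
            (hmono m (by omega))
          exact h1.trans h2
        · obtain rfl : i = m + 1 := le_antisymm him hge
          exact le_rfl
    exact le_max_of_le_right (chain2 t hit le_rfl)
  · push_neg at hcase
    have chain1 : ∀ m, m ≤ t → (∀ j, j < m → -lam * c / 2 < r * ((2 + (j : ℝ)) ^ ν * L j)) →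
        Fa lam c ν r t m ≤ Fa lam c ν r t 0 := by
      intro m
      induction m with
      | zero => intro _ _; exact le_rfl
      | succ n ih =>
        intro hmt h
        have hstep := Fa_step_down lam c ν r hlam hc hν0 hr t n (by omega)
          (le_of_lt (h n (Nat.lt_succ_self n)))
        exact hstep.trans (ih (by omega) (fun j hj => h j (by omega)))
    exact le_max_of_le_left (chain1 i hit hcase)

lemma Fa_zero_le (lam c ν r : ℝ) (hlam : lam < 0) (hc : 0 < c) (hν0 : 0 < ν) (hν1 : ν < 1)
    (hr : 0 < r) (t : ℕ) (D : ℝ)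
    (hD0 : Real.exp (-(lam / 2) * ∑ k ∈ Finset.range (0 + 1), c / (1 + (k : ℝ)) ^ ν) *
      (1 + ((0 : ℕ) : ℝ)) ^ (-r) ≤ D) :
    Fa lam c ν r t 0 ≤
      Real.exp ((lam * c / (2 * (1 - ν))) * ((1 + (t : ℝ)) ^ (1 - ν) - 1)) * D := by
  have h1ν : (0 : ℝ) < 1 - ν := by linarith
  set S := ∑ k ∈ Finset.range (t + 1), c / (1 + (k : ℝ)) ^ ν with hS
  have hins : Finset.range (t + 1) = insert 0 (Finset.Icc 1 t) := by
    ext x; simp only [Finset.mem_range, Finset.mem_insert, Finset.mem_Icc]; omega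
  have hsplit : S = c / (1 + ((0 : ℕ) : ℝ)) ^ ν + ∑ k ∈ Finset.Icc 1 t, c / (1 + (k : ℝ)) ^ ν := by
    rw [hS, hins, Finset.sum_insert (by simp)]
  have hβ0 : c / (1 + ((0 : ℕ) : ℝ)) ^ ν = c := by norm_num
  -- simplify hD0
  have hD0' : Real.exp (-(lam / 2) * c) ≤ D := by
    rw [Finset.sum_range_one, hβ0] at hD0
    have : (1 + ((0 : ℕ) : ℝ)) ^ (-r) = 1 := by norm_num
    rw [this, mul_one] at hD0
    exact hD0
  -- Fa 0 as product
  have hFa : Fa lam c ν r t 0 = Real.exp (lam / 2 * S) * Real.exp (-(lam / 2) * c) := by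
    rw [Fa]
    have h0r : (1 + ((0 : ℕ) : ℝ)) ^ (-r) = 1 := by norm_num
    rw [h0r, mul_one, ← Real.exp_add]
    congr 1
    rw [hsplit, hβ0]
    have e : (0 : ℕ) + 1 = 1 := rfl
    rw [e]
    ring
  rw [hFa]
  have hE : lam / 2 * S ≤ lam * c / (2 * (1 - ν)) * ((1 + (t : ℝ)) ^ (1 - ν) - 1) := by
    have hge := sum_beta_ge c ν hc hν0 hν1 t
    rw [← hS] at hge
    have := mul_le_mul_of_nonpos_left hge (show lam / 2 ≤ 0 by linarith)
    have e : lam * c / (2 * (1 - ν)) = lam / 2 * (c / (1 - ν)) := by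
      field_simp
    calc lam / 2 * S ≤ lam / 2 * (c / (1 - ν) * ((1 + (t : ℝ)) ^ (1 - ν) - 1)) := this
      _ = lam * c / (2 * (1 - ν)) * ((1 + (t : ℝ)) ^ (1 - ν) - 1) := by
          rw [e, mul_assoc]
  exact mul_le_mul (Real.exp_le_exp.mpr hE) hD0' (Real.exp_nonneg _) (Real.exp_nonneg _)

lemma Fa_top (lam c ν r : ℝ) (t : ℕ) : Fa lam c ν r t t = (1 + (t : ℝ)) ^ (-r) := by
  rw [Fa, Finset.Icc_eq_empty (by omega), Finset.sum_empty, mul_zero, Real.exp_zero, one_mul]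

end Stmt15Aux

/-- Maximum of kernel times polynomial decay: with `β_k = c/(1+k)^ν`, `λ < 0`,
`r > 0`, for all `0 ≤ i ≤ t`,
`exp((λ/2)·∑_{k=i+1}^{t} β_k)·(1+i)^{−r} ≤
exp((λc/(2(1−ν)))·((1+t)^{1−ν} − 1))·D + (1+t)^{−r}`, where `D` dominates the
terms `exp(−(λ/2)·∑_{k=0}^{j} β_k)·(1+j)^{−r}` for `j ≤ i_d = (2r/(|λ|c))^{1/(1−ν)}`. -/
theorem stmt_15 (lam c ν r : ℝ) (hlam : lam < 0) (hc : 0 < c)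
    (hν0 : 0 < ν) (hν1 : ν < 1) (hr : 0 < r)
    (t : ℕ) (idx : ℕ) (hidx : ((2 * r / (|lam| * c)) ^ ((1 : ℝ) / (1 - ν)) : ℝ) ≤ idx)
    (D : ℝ)
    (hD : ∀ j : ℕ, j ≤ idx →
      Real.exp (-(lam / 2) * ∑ k ∈ Finset.range (j + 1), c / (1 + (k : ℝ)) ^ ν) *
          (1 + (j : ℝ)) ^ (-r) ≤ D) :
    ∀ i ≤ t,
      Real.exp ((lam / 2) * ∑ k ∈ Finset.Icc (i + 1) t, c / (1 + (k : ℝ)) ^ ν) *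
          (1 + (i : ℝ)) ^ (-r)
        ≤ Real.exp ((lam * c / (2 * (1 - ν))) * ((1 + (t : ℝ)) ^ (1 - ν) - 1)) * D +
          (1 + (t : ℝ)) ^ (-r) := by
  intro i hit
  have hmax := Stmt15Aux.Fa_le_max lam c ν r hlam hc hν0 hν1 hr t i hit
  have hD0 := hD 0 (Nat.zero_le idx)
  have h1 := Stmt15Aux.Fa_zero_le lam c ν r hlam hc hν0 hν1 hr t D hD0
  have h2 := Stmt15Aux.Fa_top lam c ν r t
  have hBpos : (0 : ℝ) ≤ (1 + (t : ℝ)) ^ (-r) :=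
    (Real.rpow_pos_of_pos (by positivity) _).le
  have hDpos : (0 : ℝ) ≤ D := le_trans (by positivity) hD0
  have hApos : (0 : ℝ) ≤
      Real.exp ((lam * c / (2 * (1 - ν))) * ((1 + (t : ℝ)) ^ (1 - ν) - 1)) * D :=
    mul_nonneg (Real.exp_nonneg _) hDpos
  show Stmt15Aux.Fa lam c ν r t i ≤ _
  refine hmax.trans (max_le ?_ ?_)
  · exact h1.trans (le_add_of_nonneg_right hBpos)
  · rw [h2]; exact le_add_of_nonneg_left hApos
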